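/- Let |Ψ̃⟩ := |Φ̃⟩⊗|+⟩ where |Φ̃⟩ = (sqrt(8+3√7)/4)|00⟩ + (sqrt(8-3√7)/4)|11⟩ and |+⟩ = (|0⟩+|1⟩)/√2. Then ‖Q(|Ψ̃⟩⟨Ψ̃|)‖ = 10 + (5/4)·sqrt 22, where Q(M) := 24·tr_{1,2,3}[P₄(M⊗𝟙)]. Consequently the single-element estimation fidelity (1/20)·‖Q(|Ψ̃⟩⟨Ψ̃|)‖ equals 1/2 + √22/16. -/

import Mathlib

/-- The projector onto the symmetric subspace `Sym⁴(ℂ²)` of `(ℂ²)^{⊗4}`. -/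
noncomputable def P4 : Matrix (Fin 4 → Fin 2) (Fin 4 → Fin 2) ℂ :=
  fun v w => (1/24) * ∑ σ : Equiv.Perm (Fin 4), if (fun i => w (σ i)) = v then 1 else 0

/-- The first three tensor factors of an index of `(ℂ²)^{⊗4}`. -/
def front (v : Fin 4 → Fin 2) : Fin 3 → Fin 2 := fun i => v i.castSucc

/-- `M ⊗ 𝟙` for `M` an operator on `(ℂ²)^{⊗3}`. -/
noncomputable def tensId (M : Matrix (Fin 3 → Fin 2) (Fin 3 → Fin 2) ℂ) :
    Matrix (Fin 4 → Fin 2) (Fin 4 → Fin 2) ℂ :=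
  fun v w => M (front v) (front w) * (if v (Fin.last 3) = w (Fin.last 3) then 1 else 0)

/-- `Q(M) = 4!·tr_{1,2,3}[P₄ (M ⊗ 𝟙)]`. -/
noncomputable def Qmap (M : Matrix (Fin 3 → Fin 2) (Fin 3 → Fin 2) ℂ) :
    Matrix (Fin 2) (Fin 2) ℂ :=
  fun x y => 24 * ∑ u : Fin 3 → Fin 2, (P4 * tensId M) (Fin.snoc u x) (Fin.snoc u y)

/-- Coefficients of `|Φ̃⟩ = (√(8+3√7)/4)|00⟩ + (√(8-3√7)/4)|11⟩`. -/
noncomputable def Φt (i j : Fin 2) : ℂ :=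
  if i = 0 ∧ j = 0 then (Real.sqrt (8 + 3*Real.sqrt 7)/4 : ℝ)
  else if i = 1 ∧ j = 1 then (Real.sqrt (8 - 3*Real.sqrt 7)/4 : ℝ)
  else 0

/-- `|Ψ̃⟩ = |Φ̃⟩ ⊗ |+⟩`. -/
noncomputable def Ψt (v : Fin 3 → Fin 2) : ℂ :=
  Φt (v 0) (v 1) * ((1/Real.sqrt 2 : ℝ) : ℂ)

/-- `|Ψ̃⟩⟨Ψ̃|`. -/
noncomputable def outerΨt : Matrix (Fin 3 → Fin 2) (Fin 3 → Fin 2) ℂ :=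
  fun v w => Ψt v * (starRingEnd ℂ) (Ψt w)

-- infra
def cnt (v : Fin 4 → Fin 2) : ℕ := ∑ i, (v i).val
def Ccoef (v w : Fin 4 → Fin 2) : ℕ :=
  if cnt v = cnt w then Nat.factorial (cnt v) * Nat.factorial (4 - cnt v) else 0
lemma card_perm (v w : Fin 4 → Fin 2) :
    (Finset.univ.filter (fun σ : Equiv.Perm (Fin 4) => (fun i => w (σ i)) = v)).card =
      Ccoef v w := by revert v w; decide
lemma P4_eq (v w : Fin 4 → Fin 2) : P4 v w = (Ccoef v w : ℂ) / 24 := by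
  rw [P4, Finset.sum_boole, card_perm]; ring

lemma sum8 {M : Type*} [AddCommMonoid M] (f : (Fin 3 → Fin 2) → M) :
    ∑ v, f v = f ![0,0,0] + f ![0,0,1] + f ![0,1,0] + f ![0,1,1] +
      f ![1,0,0] + f ![1,0,1] + f ![1,1,0] + f ![1,1,1] := by
  rw [show (Finset.univ : Finset (Fin 3 → Fin 2)) =
    {![0,0,0], ![0,0,1], ![0,1,0], ![0,1,1], ![1,0,0], ![1,0,1], ![1,1,0], ![1,1,1]} from by decide]
  repeat rw [Finset.sum_insert (by decide)]
  rw [Finset.sum_singleton]; simp only [← add_assoc]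

lemma sum16 {M : Type*} [AddCommMonoid M] (f : (Fin 4 → Fin 2) → M) :
    ∑ v, f v = f ![0,0,0,0] + f ![0,0,0,1] + f ![0,0,1,0] + f ![0,0,1,1] +
      f ![0,1,0,0] + f ![0,1,0,1] + f ![0,1,1,0] + f ![0,1,1,1] +
      f ![1,0,0,0] + f ![1,0,0,1] + f ![1,0,1,0] + f ![1,0,1,1] +
      f ![1,1,0,0] + f ![1,1,0,1] + f ![1,1,1,0] + f ![1,1,1,1] := by
  rw [show (Finset.univ : Finset (Fin 4 → Fin 2)) =
    {![0,0,0,0], ![0,0,0,1], ![0,0,1,0], ![0,0,1,1], ![0,1,0,0], ![0,1,0,1], ![0,1,1,0], ![0,1,1,1],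
     ![1,0,0,0], ![1,0,0,1], ![1,0,1,0], ![1,0,1,1], ![1,1,0,0], ![1,1,0,1], ![1,1,1,0], ![1,1,1,1]} from by decide]
  repeat rw [Finset.sum_insert (by decide)]
  rw [Finset.sum_singleton]; simp only [← add_assoc]

lemma snoc3 (a b c x : Fin 2) : Fin.snoc ![a,b,c] x = ![a,b,c,x] := by
  funext i; fin_cases i <;> rfl
lemma front4 (a b c d : Fin 2) : front ![a,b,c,d] = ![a,b,c] := by
  funext i; fin_cases i <;> rfl
lemma appLast (a b c d : Fin 2) : (![a,b,c,d] : Fin 4 → Fin 2) (Fin.last 3) = d := rfl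

lemma q00 : Qmap outerΨt 0 0 = ((10 + (15/8)*Real.sqrt 7 : ℝ) : ℂ) := by
  rw [Qmap, sum8]
  simp only [snoc3, Matrix.mul_apply]
  rw [sum16, sum16, sum16, sum16, sum16, sum16, sum16, sum16]
  simp only [P4_eq, tensId, front4, appLast, outerΨt, Ψt, Φt]
  norm_num [Ccoef, cnt, Fin.sum_univ_four, Fin.val_zero, Fin.val_one, Matrix.cons_val_zero, Matrix.cons_val_one, Matrix.cons_val_two, Matrix.cons_val_three, Matrix.head_cons, Matrix.tail_cons, Nat.factorial, Complex.conj_ofReal, map_div₀, map_ofNat]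
  norm_cast
  ring_nf
  simp only [← Complex.ofReal_pow, ← Complex.ofReal_inv, ← Complex.ofReal_mul, ← Complex.ofReal_add,
    ← Complex.ofReal_ofNat, ← Complex.ofReal_div, ← Complex.ofReal_one, ← Complex.ofReal_neg, Complex.ofReal_inj]
  ring_nf
  have h7 : Real.sqrt 7 * Real.sqrt 7 = 7 := Real.mul_self_sqrt (by norm_num)
  have h7n := Real.sqrt_nonneg 7
  have h8m : (0:ℝ) ≤ 8 - Real.sqrt 7 * 3 := by nlinarith
  have hi : ((Real.sqrt 2:ℝ))⁻¹^2 = 1/2 := by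
    rw [inv_pow, Real.sq_sqrt (by norm_num)]; norm_num
  have hAB : Real.sqrt (8 + Real.sqrt 7 * 3) * Real.sqrt (8 - Real.sqrt 7 * 3) = 1 := by
    rw [← Real.sqrt_mul (by positivity)]
    rw [show (8 + Real.sqrt 7 * 3) * (8 - Real.sqrt 7 * 3) = 64 - 9*(Real.sqrt 7 * Real.sqrt 7) by ring, h7]
    norm_num
  try rw [Real.sq_sqrt (by positivity : (0:ℝ) ≤ 8 + Real.sqrt 7 * 3)]
  try rw [Real.sq_sqrt h8m]
  try rw [hi]
  try rw [hAB]
  push_cast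
  try ring
  try (rw [← Complex.ofReal_mul, hAB]; norm_num)

lemma q01 : Qmap outerΨt 0 1 = ((25/8 : ℝ) : ℂ) := by
  rw [Qmap, sum8]
  simp only [snoc3, Matrix.mul_apply]
  rw [sum16, sum16, sum16, sum16, sum16, sum16, sum16, sum16]
  simp only [P4_eq, tensId, front4, appLast, outerΨt, Ψt, Φt]
  norm_num [Ccoef, cnt, Fin.sum_univ_four, Fin.val_zero, Fin.val_one, Matrix.cons_val_zero, Matrix.cons_val_one, Matrix.cons_val_two, Matrix.cons_val_three, Matrix.head_cons, Matrix.tail_cons, Nat.factorial, Complex.conj_ofReal, map_div₀, map_ofNat]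
  norm_cast
  ring_nf
  simp only [← Complex.ofReal_pow, ← Complex.ofReal_inv, ← Complex.ofReal_mul, ← Complex.ofReal_add,
    ← Complex.ofReal_ofNat, ← Complex.ofReal_div, ← Complex.ofReal_one, ← Complex.ofReal_neg, Complex.ofReal_inj]
  ring_nf
  have h7 : Real.sqrt 7 * Real.sqrt 7 = 7 := Real.mul_self_sqrt (by norm_num)
  have h7n := Real.sqrt_nonneg 7
  have h8m : (0:ℝ) ≤ 8 - Real.sqrt 7 * 3 := by nlinarith
  have hi : ((Real.sqrt 2:ℝ))⁻¹^2 = 1/2 := by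
    rw [inv_pow, Real.sq_sqrt (by norm_num)]; norm_num
  have hAB : Real.sqrt (8 + Real.sqrt 7 * 3) * Real.sqrt (8 - Real.sqrt 7 * 3) = 1 := by
    rw [← Real.sqrt_mul (by positivity)]
    rw [show (8 + Real.sqrt 7 * 3) * (8 - Real.sqrt 7 * 3) = 64 - 9*(Real.sqrt 7 * Real.sqrt 7) by ring, h7]
    norm_num
  try rw [Real.sq_sqrt (by positivity : (0:ℝ) ≤ 8 + Real.sqrt 7 * 3)]
  try rw [Real.sq_sqrt h8m]
  try rw [hi]
  try rw [hAB]
  push_cast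
  try ring
  try (rw [← Complex.ofReal_mul, hAB]; norm_num)
  rw [hAB]; norm_num

lemma q10 : Qmap outerΨt 1 0 = ((25/8 : ℝ) : ℂ) := by
  rw [Qmap, sum8]
  simp only [snoc3, Matrix.mul_apply]
  rw [sum16, sum16, sum16, sum16, sum16, sum16, sum16, sum16]
  simp only [P4_eq, tensId, front4, appLast, outerΨt, Ψt, Φt]
  norm_num [Ccoef, cnt, Fin.sum_univ_four, Fin.val_zero, Fin.val_one, Matrix.cons_val_zero, Matrix.cons_val_one, Matrix.cons_val_two, Matrix.cons_val_three, Matrix.head_cons, Matrix.tail_cons, Nat.factorial, Complex.conj_ofReal, map_div₀, map_ofNat]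
  norm_cast
  ring_nf
  simp only [← Complex.ofReal_pow, ← Complex.ofReal_inv, ← Complex.ofReal_mul, ← Complex.ofReal_add,
    ← Complex.ofReal_ofNat, ← Complex.ofReal_div, ← Complex.ofReal_one, ← Complex.ofReal_neg, Complex.ofReal_inj]
  ring_nf
  have h7 : Real.sqrt 7 * Real.sqrt 7 = 7 := Real.mul_self_sqrt (by norm_num)
  have h7n := Real.sqrt_nonneg 7
  have h8m : (0:ℝ) ≤ 8 - Real.sqrt 7 * 3 := by nlinarith
  have hi : ((Real.sqrt 2:ℝ))⁻¹^2 = 1/2 := by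
    rw [inv_pow, Real.sq_sqrt (by norm_num)]; norm_num
  have hAB : Real.sqrt (8 + Real.sqrt 7 * 3) * Real.sqrt (8 - Real.sqrt 7 * 3) = 1 := by
    rw [← Real.sqrt_mul (by positivity)]
    rw [show (8 + Real.sqrt 7 * 3) * (8 - Real.sqrt 7 * 3) = 64 - 9*(Real.sqrt 7 * Real.sqrt 7) by ring, h7]
    norm_num
  try rw [Real.sq_sqrt (by positivity : (0:ℝ) ≤ 8 + Real.sqrt 7 * 3)]
  try rw [Real.sq_sqrt h8m]
  try rw [hi]
  try rw [hAB]
  push_cast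
  try ring
  try (rw [← Complex.ofReal_mul, hAB]; norm_num)
  rw [hAB]; norm_num

lemma q11 : Qmap outerΨt 1 1 = ((10 - (15/8)*Real.sqrt 7 : ℝ) : ℂ) := by
  rw [Qmap, sum8]
  simp only [snoc3, Matrix.mul_apply]
  rw [sum16, sum16, sum16, sum16, sum16, sum16, sum16, sum16]
  simp only [P4_eq, tensId, front4, appLast, outerΨt, Ψt, Φt]
  norm_num [Ccoef, cnt, Fin.sum_univ_four, Fin.val_zero, Fin.val_one, Matrix.cons_val_zero, Matrix.cons_val_one, Matrix.cons_val_two, Matrix.cons_val_three, Matrix.head_cons, Matrix.tail_cons, Nat.factorial, Complex.conj_ofReal, map_div₀, map_ofNat]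
  norm_cast
  ring_nf
  simp only [← Complex.ofReal_pow, ← Complex.ofReal_inv, ← Complex.ofReal_mul, ← Complex.ofReal_add,
    ← Complex.ofReal_ofNat, ← Complex.ofReal_div, ← Complex.ofReal_one, ← Complex.ofReal_neg, Complex.ofReal_inj]
  ring_nf
  have h7 : Real.sqrt 7 * Real.sqrt 7 = 7 := Real.mul_self_sqrt (by norm_num)
  have h7n := Real.sqrt_nonneg 7
  have h8m : (0:ℝ) ≤ 8 - Real.sqrt 7 * 3 := by nlinarith
  have hi : ((Real.sqrt 2:ℝ))⁻¹^2 = 1/2 := by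
    rw [inv_pow, Real.sq_sqrt (by norm_num)]; norm_num
  have hAB : Real.sqrt (8 + Real.sqrt 7 * 3) * Real.sqrt (8 - Real.sqrt 7 * 3) = 1 := by
    rw [← Real.sqrt_mul (by positivity)]
    rw [show (8 + Real.sqrt 7 * 3) * (8 - Real.sqrt 7 * 3) = 64 - 9*(Real.sqrt 7 * Real.sqrt 7) by ring, h7]
    norm_num
  try rw [Real.sq_sqrt (by positivity : (0:ℝ) ≤ 8 + Real.sqrt 7 * 3)]
  try rw [Real.sq_sqrt h8m]
  try rw [hi]
  try rw [hAB]
  push_cast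
  try ring
  try (rw [← Complex.ofReal_mul, hAB]; norm_num)


noncomputable def Amat : Matrix (Fin 2) (Fin 2) ℂ :=
  !![((10 + (15/8)*Real.sqrt 7 : ℝ) : ℂ), ((25/8 : ℝ) : ℂ);
     ((25/8 : ℝ) : ℂ), ((10 - (15/8)*Real.sqrt 7 : ℝ) : ℂ)]

lemma Qmap_eval : Qmap outerΨt = Amat := by
  funext x y
  fin_cases x <;> fin_cases y
  · simpa [Amat] using q00
  · simpa [Amat] using q01
  · simpa [Amat] using q10
  · simpa [Amat] using q11

lemma key (s7 s22 : ℝ) (h7 : s7*s7 = 7) (h22 : s22*s22 = 22)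
    (h7n : 0 ≤ s7) (h22n : 0 ≤ s22) (a b c d : ℝ) :
    ((10+(15/8)*s7)*a + (25/8)*c)^2 + ((10+(15/8)*s7)*b + (25/8)*d)^2 +
      ((25/8)*a + (10-(15/8)*s7)*c)^2 + ((25/8)*b + (10-(15/8)*s7)*d)^2 ≤
      (10+(5/4)*s22)^2 * (a^2+b^2+c^2+d^2) := by
  have hα : 0 < 25*s22 - (75/2)*s7 := by nlinarith
  have hid : (25*s22 - (75/2)*s7) *
      ((10+(5/4)*s22)^2*(a^2+b^2+c^2+d^2) -
        (((10+(15/8)*s7)*a + (25/8)*c)^2 + ((10+(15/8)*s7)*b + (25/8)*d)^2 +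
          ((25/8)*a + (10-(15/8)*s7)*c)^2 + ((25/8)*b + (10-(15/8)*s7)*d)^2)) =
      ((25*s22-(75/2)*s7)*a - (125/2)*c)^2 + ((25*s22-(75/2)*s7)*b - (125/2)*d)^2 := by
    linear_combination ((-5625/4)*d*d + (-5625/4)*c*c + (-5625/64)*s22*d*d + (-5625/64)*s22*c*c
      + (-5625/64)*s22*b*b + (-5625/64)*s22*a*a + (16875/128)*s7*d*d + (16875/128)*s7*c*c
      + (16875/128)*s7*b*b + (16875/128)*s7*a*a) * h7 +
      ((625:ℝ)*d*d + 625*c*c + (625/16)*s22*d*d + (625/16)*s22*c*c + (625/16)*s22*b*b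
      + (625/16)*s22*a*a + (-1875/32)*s7*d*d + (-1875/32)*s7*c*c + (-1875/32)*s7*b*b
      + (-1875/32)*s7*a*a) * h22
  nlinarith [hid, hα, sq_nonneg ((25*s22-(75/2)*s7)*a - (125/2)*c),
    sq_nonneg ((25*s22-(75/2)*s7)*b - (125/2)*d)]

lemma norm_Q : ‖Matrix.toEuclideanCLM (𝕜 := ℂ) (Qmap outerΨt)‖ = 10 + (5/4)*Real.sqrt 22 := by
  rw [Qmap_eval]
  have h7 : Real.sqrt 7 * Real.sqrt 7 = 7 := Real.mul_self_sqrt (by norm_num)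
  have h22 : Real.sqrt 22 * Real.sqrt 22 = 22 := Real.mul_self_sqrt (by norm_num)
  have h7n := Real.sqrt_nonneg 7
  have h22n := Real.sqrt_nonneg 22
  apply le_antisymm
  · apply ContinuousLinearMap.opNorm_le_bound _ (by positivity)
    intro x
    have hx : (Matrix.toEuclideanCLM (𝕜 := ℂ) Amat) x =
        (WithLp.equiv 2 _).symm (Matrix.toLin' Amat (WithLp.equiv 2 _ x)) := by
      conv_lhs => rw [show x = (WithLp.equiv 2 _).symm (WithLp.equiv 2 _ x) from rfl]
      rfl
    rw [hx, EuclideanSpace.norm_eq, EuclideanSpace.norm_eq]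
    rw [show (10 + 5/4*Real.sqrt 22) * Real.sqrt (∑ i, ‖x i‖^2) =
        Real.sqrt ((10 + 5/4*Real.sqrt 22)^2 * ∑ i, ‖x i‖^2) by
      rw [Real.sqrt_mul (by positivity), Real.sqrt_sq (by positivity)]]
    apply Real.sqrt_le_sqrt
    simp only [WithLp.equiv_symm_apply, WithLp.ofLp_toLp, Fin.sum_univ_two, Matrix.toLin'_apply,
      Matrix.mulVec, dotProduct, Amat, Matrix.cons_val', Matrix.cons_val_zero,
      Matrix.cons_val_one, Matrix.head_cons, Matrix.empty_val', Matrix.cons_val_fin_one,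
      Matrix.head_fin_const, Fin.isValue, Matrix.of_apply]
    have e0 : (WithLp.equiv 2 (Fin 2 → ℂ)) x 0 = x 0 := rfl
    have e1 : (WithLp.equiv 2 (Fin 2 → ℂ)) x 1 = x 1 := rfl
    rw [e0, e1]
    have hnorm : ∀ z : ℂ, ‖z‖^2 = z.re^2 + z.im^2 := by
      intro z
      rw [Complex.sq_norm, Complex.normSq_apply]; ring
    rw [hnorm, hnorm, hnorm, hnorm]
    have hk := key (Real.sqrt 7) (Real.sqrt 22) h7 h22 h7n h22n
      (x 0).re (x 0).im (x 1).re (x 1).im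
    simp only [Complex.add_re, Complex.add_im, Complex.mul_re, Complex.mul_im,
      Complex.ofReal_re, Complex.ofReal_im]
    nlinarith [hk]
  · set w : Fin 2 → ℂ := ![((25/8 : ℝ) : ℂ), (((5/4)*Real.sqrt 22 - (15/8)*Real.sqrt 7 : ℝ) : ℂ)] with hw
    set v : EuclideanSpace ℂ (Fin 2) := (WithLp.equiv 2 _).symm w with hv
    have h7C : (Real.sqrt 7 : ℂ) * (Real.sqrt 7 : ℂ) = 7 := by exact_mod_cast h7
    have h22C : (Real.sqrt 22 : ℂ) * (Real.sqrt 22 : ℂ) = 22 := by exact_mod_cast h22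
    have hAv : Matrix.toLin' Amat w = ((10 + (5/4)*Real.sqrt 22 : ℝ) : ℂ) • w := by
      funext i
      fin_cases i <;>
        simp only [Matrix.toLin'_apply, Matrix.mulVec, dotProduct, Fin.sum_univ_two,
          Amat, hw, Matrix.cons_val', Matrix.cons_val_zero, Matrix.cons_val_one,
          Matrix.head_cons, Matrix.empty_val', Matrix.cons_val_fin_one, Matrix.head_fin_const,
          Fin.isValue, Matrix.of_apply, Pi.smul_apply, smul_eq_mul] <;>
        push_cast <;> ring_nf
      · linear_combination (225/64 : ℂ) * h7C - (25/16 : ℂ) * h22C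
    have hTv : (Matrix.toEuclideanCLM (𝕜 := ℂ) Amat) v =
        ((10 + (5/4)*Real.sqrt 22 : ℝ) : ℂ) • v := by
      rw [hv, WithLp.equiv_symm_apply, Matrix.toEuclideanCLM_toLp, ← Matrix.toLin'_apply, hAv, WithLp.toLp_smul]
    have hnv : 0 < ‖v‖ := by
      rw [norm_pos_iff]
      intro h
      have : w 0 = 0 := by
        have := congrArg (fun z => (WithLp.equiv 2 (Fin 2 → ℂ)) z 0) h
        simpa [hv] using this
      simp [hw] at this
    have h1 : ‖(Matrix.toEuclideanCLM (𝕜 := ℂ) Amat) v‖ = (10 + (5/4)*Real.sqrt 22) * ‖v‖ := by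
      rw [hTv, norm_smul, Complex.norm_real, Real.norm_eq_abs, abs_of_nonneg (by positivity)]
    have h2 := (Matrix.toEuclideanCLM (𝕜 := ℂ) Amat).le_opNorm v
    rw [h1] at h2
    have := le_of_mul_le_mul_right h2 hnv
    linarith

theorem stmt14 :
    ‖Matrix.toEuclideanCLM (𝕜 := ℂ) (Qmap outerΨt)‖ = 10 + (5/4)*Real.sqrt 22 ∧
    (1/20) * ‖Matrix.toEuclideanCLM (𝕜 := ℂ) (Qmap outerΨt)‖ =
      1/2 + Real.sqrt 22/16 := by
  refine ⟨norm_Q, ?_⟩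
  rw [norm_Q]; ring
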